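/- In the Partition-reduction instance, every AEF allocation (A_1, A_2) allocates the two largest items g^s_k and g^l_k to different agents: exactly one of g^s_k, g^l_k lies in A_1 and the other lies in A_2. -/

import Mathlib

open Finset

/-- Average value of a bundle: total value divided by cardinality; `0` for the empty bundle. -/
noncomputable def avgVal {G : Type*} (v : G → ℝ) (S : Finset G) : ℝ :=
  (∑ g ∈ S, v g) / (S.card : ℝ)

/-- The identical valuation of the Partition-reduction instance over the `2k` items,
encoded as pairs `(j, b) : Fin k × Bool`: the item `gˢ_{j+1}` is `(j, false)` with value
`(T²k²)^(j+1)`, and the item `gˡ_{j+1}` is `(j, true)` with value `(T²k²)^(j+1) + x_{j+1}`. -/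
noncomputable def pv (k T : ℕ) (x : Fin k → ℕ) (p : Fin k × Bool) : ℝ :=
  ((T ^ 2 * k ^ 2 : ℕ) : ℝ) ^ ((p.1 : ℕ) + 1) + (if p.2 then (x p.1 : ℝ) else 0)

lemma geo_bound (m : ℝ) (hm : 2 ≤ m) (n : ℕ) :
    ∑ i ∈ Finset.range n, m ^ (i + 1) ≤ 2 * m ^ n := by
  induction n with
  | zero => norm_num
  | succ n ih =>
    rw [Finset.sum_range_succ]
    have h : m ^ (n + 1) = m * m ^ n := by ring
    nlinarith [pow_nonneg (by linarith : (0:ℝ) ≤ m) n]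

set_option maxHeartbeats 1000000 in
lemma aux_split (k T : ℕ) (hk : 4 ≤ k) (hT : 4 ≤ T)
    (x : Fin k → ℕ) (hsum : ∑ j, x j = 2 * T)
    (A1 A2 : Finset (Fin k × Bool))
    (hdisj : Disjoint A1 A2)
    (hs : ((⟨k - 1, Nat.sub_lt (by omega) Nat.one_pos⟩ : Fin k), false) ∈ A1)
    (hl : ((⟨k - 1, Nat.sub_lt (by omega) Nat.one_pos⟩ : Fin k), true) ∈ A1) :
    avgVal (pv k T x) A1 ≠ avgVal (pv k T x) A2 := by
  set j0 : Fin k := ⟨k - 1, Nat.sub_lt (by omega) Nat.one_pos⟩ with hj0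
  set m : ℝ := ((T ^ 2 * k ^ 2 : ℕ) : ℝ) with hmdef
  have hk' : (4:ℝ) ≤ (k:ℝ) := by exact_mod_cast hk
  have hT' : (4:ℝ) ≤ (T:ℝ) := by exact_mod_cast hT
  have h16T : (16:ℝ) ≤ (T:ℝ)^2 := by nlinarith
  have h16k : (16:ℝ) ≤ (k:ℝ)^2 := by nlinarith
  have h4k : 4*(k:ℝ) ≤ (k:ℝ)^2 := by nlinarith
  have hm : (256:ℝ) ≤ m := by
    rw [hmdef]; push_cast
    nlinarith [mul_le_mul h16T h16k (by norm_num) (by linarith)]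
  have hmk : 64 * (k:ℝ) ≤ m := by
    rw [hmdef]; push_cast
    nlinarith [mul_le_mul h16T h4k (by linarith) (by linarith)]
  have hm2 : (2:ℝ) ≤ m := by linarith
  have hm0 : (0:ℝ) < m := by linarith
  have hpow : (0:ℝ) < m ^ (k - 1) := pow_pos hm0 _
  have hnn : ∀ p : Fin k × Bool, 0 ≤ pv k T x p := by
    intro p; unfold pv
    have : (0:ℝ) ≤ (if p.2 then (x p.1 : ℝ) else 0) := by positivity
    positivity
  have hexp : (j0 : ℕ) + 1 = k := by simp [hj0]; omega
  have hpvs : pv k T x (j0, false) = m ^ k := by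
    show m ^ ((j0 : ℕ) + 1) + (if false then (x j0 : ℝ) else 0) = m ^ k
    rw [hexp]; simp
  have hpvl : pv k T x (j0, true) = m ^ k + x j0 := by
    show m ^ ((j0 : ℕ) + 1) + (if true then (x j0 : ℝ) else 0) = m ^ k + x j0
    rw [hexp]; simp
  have hxnn : (0:ℝ) ≤ (x j0 : ℝ) := by positivity
  -- total sum
  have hxsum : ∑ a : Fin k, (x a : ℝ) = 2 * T := by
    rw [← Nat.cast_sum]; exact_mod_cast congrArg (Nat.cast : ℕ → ℝ) hsum
  have htot : ∑ p : Fin k × Bool, pv k T x p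
      = 2 * (∑ i ∈ Finset.range k, m ^ (i + 1)) + 2 * T := by
    rw [Fintype.sum_prod_type]
    have hrow : ∀ a : Fin k, (∑ b : Bool, pv k T x (a, b))
        = 2 * m ^ ((a : ℕ) + 1) + (x a : ℝ) := by
      intro a; rw [Fintype.sum_bool]
      show (m ^ ((a : ℕ) + 1) + (if true then (x a : ℝ) else 0))
          + (m ^ ((a : ℕ) + 1) + (if false then (x a : ℝ) else 0)) = _
      norm_num; ring
    rw [Finset.sum_congr rfl (fun a _ => hrow a), Finset.sum_add_distrib,
      ← Finset.mul_sum, hxsum, Fin.sum_univ_eq_sum_range (fun i => m ^ (i + 1))]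
  have hsplitrange : ∑ i ∈ Finset.range k, m ^ (i + 1)
      = (∑ i ∈ Finset.range (k - 1), m ^ (i + 1)) + m ^ k := by
    have e1 := Finset.sum_range_succ (fun i => m ^ (i + 1)) (k - 1)
    have e2 : (k - 1) + 1 = k := by omega
    rw [e2] at e1
    exact e1
  -- bound on sum over A2
  have hne : ((j0, false) : Fin k × Bool) ≠ (j0, true) := by simp
  have hA2sub : A2 ⊆ Finset.univ \ {(j0, false), (j0, true)} := by
    intro p hp
    simp only [Finset.mem_sdiff, Finset.mem_univ, true_and, Finset.mem_insert,
      Finset.mem_singleton]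
    rintro (rfl | rfl)
    · exact (Finset.disjoint_left.mp hdisj hs) hp
    · exact (Finset.disjoint_left.mp hdisj hl) hp
  have hsdiff : ∑ p ∈ Finset.univ \ {(j0, false), (j0, true)}, pv k T x p
      = (∑ p : Fin k × Bool, pv k T x p) - (m ^ k + (m ^ k + x j0)) := by
    rw [Finset.sum_sdiff_eq_sub (Finset.subset_univ _), Finset.sum_pair hne,
      hpvs, hpvl]
  have hv2 : ∑ p ∈ A2, pv k T x p ≤ 6 * m ^ (k - 1) := by
    have h1 : ∑ p ∈ A2, pv k T x p
        ≤ ∑ p ∈ Finset.univ \ {(j0, false), (j0, true)}, pv k T x p :=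
      Finset.sum_le_sum_of_subset_of_nonneg hA2sub (fun p _ _ => hnn p)
    rw [hsdiff, htot, hsplitrange] at h1
    have hgeo : ∑ i ∈ Finset.range (k - 1), m ^ (i + 1) ≤ 2 * m ^ (k - 1) :=
      geo_bound m hm2 (k - 1)
    have hTm : (T:ℝ) ≤ m ^ (k - 1) := by
      have h2 : (T:ℝ) ≤ m := by
        rw [hmdef]; push_cast
        nlinarith [mul_le_mul (show (T:ℝ) ≤ (T:ℝ)^2 by nlinarith)
          (show (1:ℝ) ≤ (k:ℝ)^2 by nlinarith) (by norm_num) (by nlinarith)]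
      calc (T:ℝ) ≤ m := h2
        _ ≤ m ^ (k - 1) := le_self_pow₀ (by linarith) (by omega)
    linarith
  -- bound on sum over A1
  have hpairsub : ({((j0, false) : Fin k × Bool), (j0, true)} : Finset _) ⊆ A1 := by
    intro p hp
    simp only [Finset.mem_insert, Finset.mem_singleton] at hp
    rcases hp with rfl | rfl
    · exact hs
    · exact hl
  have hv1 : 2 * m ^ k ≤ ∑ p ∈ A1, pv k T x p := by
    have h1 : ∑ p ∈ ({((j0, false) : Fin k × Bool), (j0, true)} : Finset _), pv k T x p
        ≤ ∑ p ∈ A1, pv k T x p :=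
      Finset.sum_le_sum_of_subset_of_nonneg hpairsub (fun p _ _ => hnn p)
    rw [Finset.sum_pair hne, hpvs, hpvl] at h1
    linarith
  have hv1nn : (0:ℝ) ≤ ∑ p ∈ A1, pv k T x p :=
    Finset.sum_nonneg (fun p _ => hnn p)
  -- card bounds
  have hc1pos : 0 < A1.card := Finset.card_pos.mpr ⟨(j0, false), hs⟩
  have hc1le : A1.card ≤ 2 * k := by
    have := Finset.card_le_card (Finset.subset_univ A1)
    simpa [Finset.card_univ, Fintype.card_prod, mul_comm] using this
  -- average of A1 is large
  have hmkk : m ^ k = m ^ (k - 1) * m := by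
    rw [← pow_succ]; congr 1; omega
  have havg1 : 6 * m ^ (k - 1) < avgVal (pv k T x) A1 := by
    have hstep : (2 * m ^ k) / ((2 * k : ℕ) : ℝ) ≤ avgVal (pv k T x) A1 := by
      unfold avgVal
      apply div_le_div₀ hv1nn hv1 (by exact_mod_cast hc1pos)
      exact_mod_cast hc1le
    have hkpos : (0:ℝ) < ((2 * k : ℕ) : ℝ) := by positivity
    have hbig : 6 * m ^ (k - 1) < (2 * m ^ k) / ((2 * k : ℕ) : ℝ) := by
      rw [lt_div_iff₀ hkpos, hmkk]
      push_cast
      nlinarith [mul_le_mul_of_nonneg_right hmk hpow.le,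
        mul_pos (show (0:ℝ) < (k:ℝ) by linarith) hpow]
    linarith
  -- average of A2 is small
  have havg2 : avgVal (pv k T x) A2 ≤ 6 * m ^ (k - 1) := by
    rcases Finset.eq_empty_or_nonempty A2 with h | h
    · subst h; simp [avgVal]; positivity
    · have hc2 : (1:ℝ) ≤ (A2.card : ℝ) := by
        exact_mod_cast Finset.card_pos.mpr h
      have hv2nn : (0:ℝ) ≤ ∑ p ∈ A2, pv k T x p :=
        Finset.sum_nonneg (fun p _ => hnn p)
      calc avgVal (pv k T x) A2 ≤ ∑ p ∈ A2, pv k T x p := div_le_self hv2nn hc2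
        _ ≤ 6 * m ^ (k - 1) := hv2
  intro heq
  rw [heq] at havg1
  linarith

/-- In the Partition-reduction instance, every AEF allocation splits the two largest
items `gˢ_k` and `gˡ_k` between the two agents. -/
theorem partition_reduction_largest_split (k T : ℕ) (hk : 4 ≤ k) (hT : 4 ≤ T)
    (x : Fin k → ℕ) (hsum : ∑ j, x j = 2 * T)
    (A1 A2 : Finset (Fin k × Bool))
    (hdisj : Disjoint A1 A2) (hcover : A1 ∪ A2 = Finset.univ)
    (hAEF : avgVal (pv k T x) A1 = avgVal (pv k T x) A2) :
    (((⟨k - 1, by omega⟩ : Fin k), false) ∈ A1 ∧ ((⟨k - 1, by omega⟩ : Fin k), true) ∈ A2) ∨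
    (((⟨k - 1, by omega⟩ : Fin k), false) ∈ A2 ∧ ((⟨k - 1, by omega⟩ : Fin k), true) ∈ A1) := by
  have hgs : ((⟨k - 1, by omega⟩ : Fin k), false) ∈ A1 ∪ A2 := by
    rw [hcover]; exact Finset.mem_univ _
  have hgl : ((⟨k - 1, by omega⟩ : Fin k), true) ∈ A1 ∪ A2 := by
    rw [hcover]; exact Finset.mem_univ _
  rw [Finset.mem_union] at hgs hgl
  rcases hgs with hs | hs <;> rcases hgl with hl | hl
  · exact absurd hAEF (aux_split k T hk hT x hsum A1 A2 hdisj hs hl)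
  · exact Or.inl ⟨hs, hl⟩
  · exact Or.inr ⟨hs, hl⟩
  · exact absurd hAEF.symm (aux_split k T hk hT x hsum A2 A1 hdisj.symm hs hl)
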